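/- Let f be an elliptic Möbius transformation on the Riemann sphere with invariant extended line ℓ̂. Suppose there exists z ∈ ℓ̂ such that fᵏ(z) ≠ z for all k ∈ ℕ. Then for every z ∈ ℓ whose forward orbit avoids ∞, the sequence {fᵏ(z) : k ∈ ℕ} is dense in ℓ = ℓ̂ \ {∞}. -/

import Mathlib

open OnePoint Complex

open Classical in
/-- The Möbius map `z ↦ (az+b)/(cz+d)` as a self-map of the one-point
compactification (Riemann sphere for `K = ℂ`, extended real line for `K = ℝ`). -/
noncomputable def mob {K : Type*} [Field K] (a b c d : K) : OnePoint K → OnePoint K :=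
  fun z => Option.rec (motive := fun _ => OnePoint K)
    (if c = 0 then (∞ : OnePoint K) else ((a / c : K) : OnePoint K))
    (fun w => if c * w + d = 0 then (∞ : OnePoint K)
      else (((a * w + b) / (c * w + d) : K) : OnePoint K)) z


open Classical in
lemma mob_coe {K : Type*} [Field K] (a b c d w : K) :
    mob a b c d (w : OnePoint K) =
      if c * w + d = 0 then (∞ : OnePoint K)
      else (((a * w + b) / (c * w + d) : K) : OnePoint K) := rfl

open Classical in
lemma mob_inf {K : Type*} [Field K] (a b c d : K) :
    mob a b c d ∞ = if c = 0 then (∞ : OnePoint K) else ((a / c : K) : OnePoint K) := rfl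

noncomputable def Hmap (α β : ℂ) : OnePoint ℂ → ℂ :=
  fun x => Option.rec (motive := fun _ => ℂ) 1 (fun w => (w - β) / (w - α)) x

lemma Hmap_inf (α β : ℂ) : Hmap α β ∞ = 1 := rfl
lemma Hmap_coe (α β w : ℂ) : Hmap α β (w : OnePoint ℂ) = (w - β) / (w - α) := rfl

open Real in
lemma circle_dense (μ v : ℂ) (hμ : ‖μ‖ = 1) (hv : ‖v‖ = 1)
    (hirr : ∀ k : ℕ, 1 ≤ k → μ ^ k ≠ 1) {ε : ℝ} (hε : 0 < ε) :
    ∃ k : ℕ, 1 ≤ k ∧ ‖μ ^ k - v‖ < ε := by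
  have hπ := Real.pi_pos
  have hπ3 := Real.pi_gt_three
  set ε₂ : ℝ := min (ε / 3) (1 / 2) with hε₂def
  have hε₂ : 0 < ε₂ := lt_min (by linarith) (by norm_num)
  have hε₂le : ε₂ ≤ 1 / 2 := min_le_right _ _
  have hε₂ε : 2 * ε₂ < ε := by
    have : ε₂ ≤ ε / 3 := min_le_left _ _
    linarith
  set θ : ℝ := μ.arg with hθdef
  have hexpμ : Complex.exp (θ * I) = μ := by
    conv_rhs => rw [← Complex.norm_mul_exp_arg_mul_I μ]
    rw [hμ]; simp [hθdef]
  obtain ⟨N, hN⟩ := exists_nat_gt (2 * π / ε₂)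
  have hNpos : 0 < N := by
    have h0 : (0:ℝ) < 2 * π / ε₂ := by positivity
    exact_mod_cast Nat.cast_pos.mp (lt_trans h0 hN)
  obtain ⟨j, k, hk0, hkN, happ⟩ := Real.exists_int_int_abs_mul_sub_le (θ / (2 * π)) hNpos
  set m : ℕ := k.toNat with hmdef
  have hm1 : 1 ≤ m := by omega
  have hmk : (m : ℝ) = (k : ℝ) := by exact_mod_cast Int.toNat_of_nonneg hk0.le
  set ψ : ℝ := m * θ - 2 * π * j with hψdef
  have hψε : |ψ| < ε₂ := by
    have h1 : ψ = 2 * π * ((k : ℝ) * (θ / (2 * π)) - j) := by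
      rw [hψdef, hmk]; field_simp
    have h2 : |ψ| = 2 * π * |(k : ℝ) * (θ / (2 * π)) - j| := by
      rw [h1, abs_mul, abs_of_pos (by linarith : (0:ℝ) < 2 * π)]
    have h3 : 2 * π * |(k : ℝ) * (θ / (2 * π)) - j| ≤ 2 * π * (1 / (N + 1)) :=
      mul_le_mul_of_nonneg_left happ (by linarith)
    have h4 : 2 * π * (1 / (N + 1)) < ε₂ := by
      have h5 : 2 * π < N * ε₂ := by
        have := (div_lt_iff₀ hε₂).1 hN
        linarith
      rw [mul_one_div, div_lt_iff₀ (by positivity : (0:ℝ) < (N:ℝ) + 1)]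
      nlinarith
    linarith
  have hexpm : μ ^ m = Complex.exp (ψ * I) := by
    have h6 : μ ^ m = Complex.exp ((m : ℂ) * (θ * I)) := by
      rw [Complex.exp_nat_mul, hexpμ]
    rw [h6]
    have hsplit : (m : ℂ) * ((θ:ℝ) * I) = (ψ : ℝ) * I + (j : ℤ) * (2 * π * I) := by
      push_cast [hψdef]; ring
    rw [hsplit, Complex.exp_add, Complex.exp_int_mul_two_pi_mul_I, mul_one]
  have hψ0 : ψ ≠ 0 := by
    intro h
    apply hirr m hm1
    rw [hexpm, h]; simp
  set s₀ : ℝ := v.arg with hs₀def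
  have hexpv : Complex.exp (s₀ * I) = v := by
    conv_rhs => rw [← Complex.norm_mul_exp_arg_mul_I v]
    rw [hv]; simp [hs₀def]
  have hs₀lb : -π < s₀ := Complex.neg_pi_lt_arg v
  have hs₀ub : s₀ ≤ π := Complex.arg_le_pi v
  have hψhalf : |ψ| ≤ 1 / 2 := by linarith
  have key : ∃ (n : ℕ) (s : ℝ), 1 ≤ n ∧ Complex.exp ((s:ℝ) * I) = v ∧ |(n : ℝ) * ψ - s| ≤ |ψ| := by
    rcases hψ0.lt_or_gt with hneg | hpos
    · -- ψ < 0
      have habsψ : |ψ| = -ψ := abs_of_neg hneg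
      set s : ℝ := s₀ - 4 * π with hsdef
      have hs : Complex.exp ((s:ℝ) * I) = v := by
        have h7 : ((s:ℝ) : ℂ) * I = (s₀ : ℝ) * I + ((-2 : ℤ) : ℂ) * (2 * π * I) := by
          push_cast [hsdef]; ring
        rw [h7, Complex.exp_add, Complex.exp_int_mul_two_pi_mul_I, mul_one, hexpv]
      have hsub : s ≤ -3 * π := by rw [hsdef]; linarith
      set q : ℤ := ⌊s / ψ⌋ with hqdef
      have hq1 : (1 : ℤ) ≤ q := by
        rw [hqdef, Int.le_floor]
        push_cast
        rw [le_div_iff_of_neg hneg]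
        linarith
      have hfl1 : (q : ℝ) ≤ s / ψ := Int.floor_le _
      have hfl2 : s / ψ < q + 1 := Int.lt_floor_add_one _
      have hqψ1 : s ≤ q * ψ := by
        rw [le_div_iff_of_neg hneg] at hfl1; linarith
      have hqψ2 : (q + 1) * ψ < s := by
        rw [div_lt_iff_of_neg hneg] at hfl2; linarith
      refine ⟨q.toNat, s, by omega, hs, ?_⟩
      have hqr : ((q.toNat : ℕ) : ℝ) = (q : ℝ) := by
        exact_mod_cast Int.toNat_of_nonneg (by omega : (0:ℤ) ≤ q)
      rw [hqr, habsψ, abs_le]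
      constructor <;> linarith
    · -- ψ > 0
      have habsψ : |ψ| = ψ := abs_of_pos hpos
      set s : ℝ := s₀ + 4 * π with hsdef
      have hs : Complex.exp ((s:ℝ) * I) = v := by
        have h7 : ((s:ℝ) : ℂ) * I = (s₀ : ℝ) * I + ((2 : ℤ) : ℂ) * (2 * π * I) := by
          push_cast [hsdef]; ring
        rw [h7, Complex.exp_add, Complex.exp_int_mul_two_pi_mul_I, mul_one, hexpv]
      have hsub : 3 * π ≤ s := by rw [hsdef]; linarith
      set q : ℤ := ⌊s / ψ⌋ with hqdef
      have hq1 : (1 : ℤ) ≤ q := by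
        rw [hqdef, Int.le_floor]
        push_cast
        rw [le_div_iff₀ hpos]
        linarith
      have hfl1 : (q : ℝ) ≤ s / ψ := Int.floor_le _
      have hfl2 : s / ψ < q + 1 := Int.lt_floor_add_one _
      have hqψ1 : q * ψ ≤ s := by
        rw [le_div_iff₀ hpos] at hfl1; linarith
      have hqψ2 : s < (q + 1) * ψ := by
        rw [div_lt_iff₀ hpos] at hfl2; linarith
      refine ⟨q.toNat, s, by omega, hs, ?_⟩
      have hqr : ((q.toNat : ℕ) : ℝ) = (q : ℝ) := by
        exact_mod_cast Int.toNat_of_nonneg (by omega : (0:ℤ) ≤ q)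
      rw [hqr, habsψ, abs_le]
      constructor <;> linarith
  obtain ⟨n, s, hn1, hs, hbound⟩ := key
  refine ⟨m * n, Nat.one_le_iff_ne_zero.2 (by positivity), ?_⟩
  have hpow : μ ^ (m * n) = Complex.exp (((n : ℝ) * ψ : ℝ) * I) := by
    rw [pow_mul, hexpm, ← Complex.exp_nat_mul]
    congr 1
    push_cast; ring
  have hfactor : μ ^ (m * n) - v =
      Complex.exp ((s : ℝ) * I) * (Complex.exp ((((n : ℝ) * ψ - s : ℝ)) * I) - 1) := by
    have harg : ((s:ℝ):ℂ) * I + (((n:ℝ) * ψ - s : ℝ):ℂ) * I = (((n:ℝ) * ψ : ℝ):ℂ) * I := by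
      push_cast; ring
    rw [mul_sub, mul_one, ← Complex.exp_add, harg, hs, hpow]
  have habsarg : ‖(((n : ℝ) * ψ - s : ℝ)) * I‖ = |(n : ℝ) * ψ - s| := by
    rw [norm_mul, Complex.norm_I, mul_one, Complex.norm_real, Real.norm_eq_abs]
  have hle1 : ‖(((n : ℝ) * ψ - s : ℝ)) * I‖ ≤ 1 := by
    rw [habsarg]; linarith
  have hexpbd := Complex.norm_exp_sub_one_le hle1
  rw [habsarg] at hexpbd
  calc ‖μ ^ (m * n) - v‖
      = ‖Complex.exp ((s:ℝ) * I)‖ *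
        ‖Complex.exp ((((n : ℝ) * ψ - s : ℝ)) * I) - 1‖ := by
        rw [hfactor, norm_mul]
    _ ≤ 1 * (2 * |(n : ℝ) * ψ - s|) := by
        rw [Complex.norm_exp_ofReal_mul_I]; linarith
    _ < ε := by
        rw [one_mul]; linarith

/-- `f` elliptic (`c ≠ 0`, `ad - bc = 1`, `a + d` real in `(-2,2)`) with
fixed points `α ≠ β` and invariant extended line `ℓ̂ = {z : |z-α| = |z-β|} ∪ {∞}`.
If some point of `ℓ̂` is not periodic under `f`, then for every `z ∈ ℓ` whose forward
orbit avoids `∞`, the orbit `{fᵏ(z) : k ≥ 1}` is dense in `ℓ = ℓ̂ \ {∞}`. -/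
theorem stmt12 (a b c d : ℂ) (hc : c ≠ 0) (hdet : a * d - b * c = 1)
    (him : (a + d).im = 0) (h1 : -2 < (a + d).re) (h2 : (a + d).re < 2)
    (α β : ℂ) (hαβ : α ≠ β)
    (hα : c * α ^ 2 - (a - d) * α - b = 0)
    (hβ : c * β ^ 2 - (a - d) * β - b = 0)
    (hnp : ∃ z : OnePoint ℂ,
      z ∈ ({∞} ∪ (fun w : ℂ => (w : OnePoint ℂ)) ''
        {w : ℂ | ‖w - α‖ = ‖w - β‖}) ∧
      ∀ k : ℕ, 1 ≤ k → (mob a b c d)^[k] z ≠ z)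
    (z : ℂ) (hz : ‖z - α‖ = ‖z - β‖)
    (hzorb : ∀ k : ℕ, (mob a b c d)^[k] ((z : OnePoint ℂ)) ≠ ∞) :
    ∀ y : ℂ, ‖y - α‖ = ‖y - β‖ →
      y ∈ closure {w : ℂ | ∃ k : ℕ, 1 ≤ k ∧
        (mob a b c d)^[k] ((z : OnePoint ℂ)) = (w : OnePoint ℂ)} := by
  have hne : α - β ≠ 0 := sub_ne_zero.2 hαβ
  have hsum : c * α + c * β = a - d := by
    have h0 : (α - β) * (c * α + c * β - (a - d)) = 0 := by linear_combination hα - hβ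
    rcases mul_eq_zero.1 h0 with h | h
    · exact absurd h hne
    · linear_combination h
  have hprod : c * (α * β) = -b := by linear_combination α * hsum - hα
  have huu' : (c * α + d) * (c * β + d) = 1 := by
    linear_combination c * hprod + d * hsum + hdet
  have hu : c * α + d ≠ 0 := left_ne_zero_of_mul_eq_one huu'
  have hu' : c * β + d ≠ 0 := right_ne_zero_of_mul_eq_one huu'
  have htr : (c * α + d) + (c * β + d) = a + d := by linear_combination hsum
  have hq : (c * α + d) ^ 2 - (a + d) * (c * α + d) + 1 = 0 := by
    linear_combination (c * α + d) * htr - huu'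
  have htc : (starRingEnd ℂ) (a + d) = (a + d) := Complex.conj_eq_iff_im.2 him
  have hqc : ((starRingEnd ℂ) (c * α + d)) ^ 2 - (a + d) * ((starRingEnd ℂ) (c * α + d)) + 1 = 0 := by
    have h0 := congrArg (starRingEnd ℂ) hq
    simpa [map_sub, map_add, map_mul, map_pow, map_one, map_zero, htc] using h0
  have hcases : ((starRingEnd ℂ) (c * α + d) - (c * α + d)) *
      ((starRingEnd ℂ) (c * α + d) - (c * β + d)) = 0 := by
    linear_combination hqc - ((starRingEnd ℂ) (c * α + d)) * htr + huu'
  have habsu : ‖c * α + d‖ = 1 := by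
    rcases mul_eq_zero.1 hcases with h | h
    · exfalso
      have hux : ((c * α + d).re : ℂ) = c * α + d := Complex.conj_eq_iff_re.1 (sub_eq_zero.1 h)
      have htre : ((a + d).re : ℂ) = a + d := Complex.conj_eq_iff_re.1 htc
      have hqx : ((c * α + d).re : ℂ) ^ 2 - ((a + d).re : ℂ) * ((c * α + d).re : ℂ) + 1 = 0 := by
        rw [hux, htre]; exact hq
      have hqr : (c * α + d).re ^ 2 - (a + d).re * (c * α + d).re + 1 = 0 := by
        exact_mod_cast hqx
      nlinarith [sq_nonneg (2 * (c * α + d).re - (a + d).re)]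
    · have hcu : (starRingEnd ℂ) (c * α + d) = c * β + d := sub_eq_zero.1 h
      have hns : ((Complex.normSq (c * α + d) : ℝ) : ℂ) = 1 := by
        rw [← Complex.mul_conj, hcu]; exact huu'
      have hns' : Complex.normSq (c * α + d) = 1 := by exact_mod_cast hns
      rw [Complex.norm_def, hns', Real.sqrt_one]
  have habsμ : ‖(c * α + d) ^ 2‖ = 1 := by rw [norm_pow, habsu, one_pow]
  -- auxiliary facts about Hmap
  have haux : ∀ w : ℂ, ‖Hmap α β (w : OnePoint ℂ)‖ = 1 → w - α ≠ 0 ∧ w - β ≠ 0 := by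
    intro w hw
    rw [Hmap_coe] at hw
    constructor
    · intro h; rw [h, div_zero] at hw; simp at hw
    · intro h; rw [h, zero_div] at hw; simp at hw
  have hmem : ∀ w : ℂ, ‖w - α‖ = ‖w - β‖ →
      ‖Hmap α β (w : OnePoint ℂ)‖ = 1 := by
    intro w hw
    have hwa : w - α ≠ 0 := by
      intro h
      rw [h, norm_zero] at hw
      have hb : w - β = 0 := norm_eq_zero.1 hw.symm
      exact hαβ (by linear_combination hb - h)
    rw [Hmap_coe, norm_div, ← hw, div_self (norm_ne_zero_iff.2 hwa)]
  -- the key functional equation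
  have hstep : ∀ x : OnePoint ℂ, ‖Hmap α β x‖ = 1 →
      Hmap α β (mob a b c d x) = (c * α + d) ^ 2 * Hmap α β x := by
    intro x hx
    cases x with
    | infty =>
      rw [Hmap_inf, mul_one, mob_inf, if_neg hc, Hmap_coe]
      have e1 : a / c - β = (c * α + d) / c := by
        rw [eq_div_iff hc, sub_mul, div_mul_cancel₀ _ hc]
        linear_combination -hsum
      have e2 : a / c - α = (c * β + d) / c := by
        rw [eq_div_iff hc, sub_mul, div_mul_cancel₀ _ hc]
        linear_combination -hsum
      rw [e1, e2, div_div_div_comm, div_self hc, div_one, div_eq_iff hu']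
      linear_combination (-(c * α + d)) * huu'
    | coe w =>
      have hwα := (haux w hx).1
      rw [mob_coe]
      by_cases hd0 : c * w + d = 0
      · rw [if_pos hd0, Hmap_inf, Hmap_coe]
        have e1 : w - β = -(c * β + d) / c := by
          rw [eq_div_iff hc]
          linear_combination hd0
        have e2 : w - α = -(c * α + d) / c := by
          rw [eq_div_iff hc]
          linear_combination hd0
        rw [e1, e2, div_div_div_comm, div_self hc, div_one, neg_div_neg_eq,
          ← mul_div_assoc, eq_div_iff hu]
        linear_combination (-(c * α + d)) * huu'
      · rw [if_neg hd0, Hmap_coe, Hmap_coe]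
        have e1 : (a * w + b) / (c * w + d) - β = (w - β) * (c * α + d) / (c * w + d) := by
          rw [eq_div_iff hd0, sub_mul, div_mul_cancel₀ _ hd0]
          linear_combination (-w) * hsum + hprod
        have e2 : (a * w + b) / (c * w + d) - α = (w - α) * (c * β + d) / (c * w + d) := by
          rw [eq_div_iff hd0, sub_mul, div_mul_cancel₀ _ hd0]
          linear_combination (-w) * hsum + hprod
        rw [e1, e2, div_div_div_comm, div_self hd0, div_one, ← mul_div_assoc,
          div_eq_div_iff (mul_ne_zero hwα hu') hwα]
        linear_combination (-(w - β) * (w - α) * (c * α + d)) * huu'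
  -- injectivity of Hmap on the circle
  have hinj : ∀ x y : OnePoint ℂ, ‖Hmap α β x‖ = 1 →
      ‖Hmap α β y‖ = 1 → Hmap α β x = Hmap α β y → x = y := by
    intro x y hx hy hxy
    cases x with
    | infty =>
      cases y with
      | infty => rfl
      | coe w =>
        exfalso
        obtain ⟨hwα, _⟩ := haux w hy
        rw [Hmap_inf, Hmap_coe] at hxy
        have h9 := (div_eq_one_iff_eq hwα).1 hxy.symm
        exact hαβ (by linear_combination h9)
    | coe w =>
      cases y with
      | infty =>
        exfalso
        obtain ⟨hwα, _⟩ := haux w hx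
        rw [Hmap_inf, Hmap_coe] at hxy
        have h9 := (div_eq_one_iff_eq hwα).1 hxy
        exact hαβ (by linear_combination h9)
      | coe w' =>
        obtain ⟨hwα, _⟩ := haux w hx
        obtain ⟨hw'α, _⟩ := haux w' hy
        rw [Hmap_coe, Hmap_coe] at hxy
        have h9 := (div_eq_div_iff hwα hw'α).1 hxy
        have h10 : (α - β) * (w' - w) = 0 := by linear_combination h9
        rcases mul_eq_zero.1 h10 with h | h
        · exact absurd h hne
        · exact congrArg (fun t : ℂ => (t : OnePoint ℂ)) (sub_eq_zero.1 h).symm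
  -- orbit formula
  have horb : ∀ (x : OnePoint ℂ), ‖Hmap α β x‖ = 1 → ∀ k : ℕ,
      ‖Hmap α β ((mob a b c d)^[k] x)‖ = 1 ∧
      Hmap α β ((mob a b c d)^[k] x) = ((c * α + d) ^ 2) ^ k * Hmap α β x := by
    intro x hx k
    induction k with
    | zero => simpa using hx
    | succ n ih =>
      obtain ⟨ih1, ih2⟩ := ih
      rw [Function.iterate_succ_apply']
      refine ⟨?_, ?_⟩
      · rw [hstep _ ih1, norm_mul, habsμ, ih1, one_mul]
      · rw [hstep _ ih1, ih2, pow_succ]; ring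
  -- the multiplier is not a root of unity
  have hirr : ∀ k : ℕ, 1 ≤ k → ((c * α + d) ^ 2) ^ k ≠ 1 := by
    obtain ⟨z₀, hz₀mem, hz₀per⟩ := hnp
    have hz₀abs : ‖Hmap α β z₀‖ = 1 := by
      rcases hz₀mem with h | ⟨w, hw, rfl⟩
      · rw [Set.mem_singleton_iff] at h
        rw [h, Hmap_inf]; simp
      · exact hmem w hw
    intro k hk heq
    apply hz₀per k hk
    apply hinj _ _ ((horb z₀ hz₀abs k).1) hz₀abs
    rw [(horb z₀ hz₀abs k).2, heq, one_mul]
  -- main argument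
  intro y hy
  have hyH := hmem y hy
  have hzH := hmem z hz
  have hyα := (haux y hyH).1
  rw [Metric.mem_closure_iff]
  intro ε hε
  have hv₀ne1 : Hmap α β (y : OnePoint ℂ) ≠ 1 := by
    rw [Hmap_coe]
    intro h
    have h9 := (div_eq_one_iff_eq hyα).1 h
    exact hαβ (by linear_combination h9)
  set g : ℂ → ℂ := fun v => (α * v - β) / (v - 1) with hgdef
  have hgH : ∀ w : ℂ, w - α ≠ 0 → g ((w - β) / (w - α)) = w := by
    intro w hw
    rw [hgdef]
    simp only
    have d1 : (w - β) / (w - α) - 1 = (α - β) / (w - α) := by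
      rw [div_sub_one hw]
      congr 1
      ring
    have d2 : α * ((w - β) / (w - α)) - β = ((α - β) * w) / (w - α) := by
      rw [eq_div_iff hw, sub_mul, mul_assoc, div_mul_cancel₀ _ hw]
      ring
    rw [d2, d1, div_div_div_comm, div_self hw, div_one, mul_div_cancel_left₀ _ hne]
  have hcont : ContinuousAt g (Hmap α β (y : OnePoint ℂ)) := by
    apply ContinuousAt.div
    · fun_prop
    · fun_prop
    · exact sub_ne_zero.2 hv₀ne1
  obtain ⟨δ, hδpos, hδ⟩ := Metric.continuousAt_iff.1 hcont ε hε
  have hHzne : Hmap α β (z : OnePoint ℂ) ≠ 0 := by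
    intro h; rw [h] at hzH; simp at hzH
  have habsv : ‖(Hmap α β (y : OnePoint ℂ)) / (Hmap α β (z : OnePoint ℂ))‖ = 1 := by
    rw [norm_div, hyH, hzH, div_one]
  obtain ⟨k, hk1, hkclose⟩ := circle_dense ((c * α + d) ^ 2)
    ((Hmap α β (y : OnePoint ℂ)) / (Hmap α β (z : OnePoint ℂ))) habsμ habsv hirr hδpos
  obtain ⟨w, hw⟩ : ∃ w : ℂ, (mob a b c d)^[k] ((z : OnePoint ℂ)) = (w : OnePoint ℂ) := by
    cases hxx : (mob a b c d)^[k] ((z : OnePoint ℂ)) with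
    | infty => exact absurd hxx (hzorb k)
    | coe w => exact ⟨w, rfl⟩
  have hHw : Hmap α β (w : OnePoint ℂ) = ((c * α + d) ^ 2) ^ k * Hmap α β (z : OnePoint ℂ) := by
    rw [← hw]; exact (horb _ hzH k).2
  have hHwabs : ‖Hmap α β (w : OnePoint ℂ)‖ = 1 := by
    rw [← hw]; exact (horb _ hzH k).1
  have hwα := (haux w hHwabs).1
  refine ⟨w, ⟨k, hk1, hw⟩, ?_⟩
  have hdist : dist (Hmap α β (w : OnePoint ℂ)) (Hmap α β (y : OnePoint ℂ)) < δ := by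
    rw [Complex.dist_eq, hHw]
    have hfac : ((c * α + d) ^ 2) ^ k * Hmap α β (z : OnePoint ℂ) - Hmap α β (y : OnePoint ℂ)
        = (((c * α + d) ^ 2) ^ k - (Hmap α β (y : OnePoint ℂ)) / (Hmap α β (z : OnePoint ℂ)))
          * Hmap α β (z : OnePoint ℂ) := by
      field_simp
    rw [hfac, norm_mul, hzH, mul_one]
    exact hkclose
  have hgw : g (Hmap α β (w : OnePoint ℂ)) = w := by rw [Hmap_coe]; exact hgH w hwα
  have hgy : g (Hmap α β (y : OnePoint ℂ)) = y := by rw [Hmap_coe]; exact hgH y hyα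
  calc dist y w = dist (g (Hmap α β (w : OnePoint ℂ))) (g (Hmap α β (y : OnePoint ℂ))) := by
        rw [hgw, hgy, dist_comm]
    _ < ε := hδ hdist
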